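/- Let F be a group and Φ : F ≃* F an automorphism, and let G_Φ = F ⋊_Φ ℤ be the mapping torus with stable letter t. Then the normalizer of the cyclic subgroup ⟨t⟩ in G_Φ, the centralizer of t in G_Φ, and the subgroup { inl(g)·t^k : g ∈ Fix(Φ), k ∈ ℤ } all coincide. -/

import Mathlib

open SemidirectProduct

/-- In the mapping torus `G_Φ = F ⋊_Φ ℤ` with stable letter `t`, the normalizer of
`⟨t⟩`, the centralizer of `t`, and the set `{inl(g)·t^k : g ∈ Fix(Φ), k ∈ ℤ}` all
coincide. -/
theorem mappingTorus_normalizer_eq_centralizer {F : Type*} [Group F] (Φ : F ≃* F)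
    (t : F ⋊[zpowersHom (MulAut F) Φ] Multiplicative ℤ)
    (ht : t = inr (Multiplicative.ofAdd 1)) :
    Subgroup.normalizer (Subgroup.zpowers t : Set _) = Subgroup.centralizer {t} ∧
    (Subgroup.centralizer {t} :
        Set (F ⋊[zpowersHom (MulAut F) Φ] Multiplicative ℤ)) =
      {x | ∃ g : F, ∃ k : ℤ, Φ g = g ∧ x = inl g * t ^ k} := by
  have htinl : ∀ g : F, t * inl g = inl (Φ g) * t := by
    intro g
    have h := inl_aut (φ := zpowersHom (MulAut F) Φ) (Multiplicative.ofAdd 1) g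
    rw [← ht] at h
    have hφ : (zpowersHom (MulAut F) Φ) (Multiplicative.ofAdd 1) = Φ := by
      simp [zpowersHom]
    rw [hφ] at h
    rw [h, ht]
    group
    simp
  have hcent : (Subgroup.centralizer {t} :
        Set (F ⋊[zpowersHom (MulAut F) Φ] Multiplicative ℤ)) =
      {x | ∃ g : F, ∃ k : ℤ, Φ g = g ∧ x = inl g * t ^ k} := by
    ext x
    simp only [SetLike.mem_coe, Subgroup.mem_centralizer_singleton_iff, Set.mem_setOf_eq]
    constructor
    · intro hx
      refine ⟨x.left, (Multiplicative.toAdd x.right), ?_, ?_⟩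
      · have h1 : (x * t).left = x.left := by
          rw [mul_left, ht]
          simp
        have h2 : (t * x).left = Φ x.left := by
          rw [mul_left, ht, left_inr, right_inr]
          simp [zpowersHom]
        rw [← h2, ← hx, h1]
      · have : t ^ (Multiplicative.toAdd x.right) = inr x.right := by
          rw [ht, ← map_zpow]
          congr 1
          simp [← ofAdd_zsmul]
        rw [this, inl_left_mul_inr_right]
    · rintro ⟨g, k, hg, rfl⟩
      have htg : t * inl g = inl g * t := by rw [htinl, hg]
      have hk : t ^ k * t = t * t ^ k := ((Commute.refl t).zpow_left k).eq
      calc inl g * t ^ k * t = inl g * (t * t ^ k) := by rw [mul_assoc, hk]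
        _ = inl g * t * t ^ k := by rw [mul_assoc]
        _ = t * inl g * t ^ k := by rw [htg]
        _ = t * (inl g * t ^ k) := by rw [mul_assoc]
  refine ⟨?_, hcent⟩
  apply le_antisymm
  · intro x hx
    have h1 : x * t * x⁻¹ ∈ Subgroup.zpowers t :=
      (Subgroup.mem_normalizer_iff.mp hx t).mp (Subgroup.mem_zpowers t)
    obtain ⟨n, hn⟩ := h1
    have hr := congrArg rightHom hn
    simp only [map_zpow, map_mul, map_inv] at hr
    have hr' : rightHom t ^ n = rightHom t := by
      rw [hr, mul_comm (rightHom x) (rightHom t)]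
      exact mul_inv_cancel_right _ _
    rw [ht, rightHom_inr] at hr'
    have hn1 : n = 1 := by
      have := congrArg Multiplicative.toAdd hr'
      simpa [← ofAdd_zsmul] using this
    rw [hn1] at hn
    have hn2 : t = x * t * x⁻¹ := by simpa using hn
    have hxt : x * t = t * x := by
      conv_rhs => rw [hn2]
      group
    exact Subgroup.mem_centralizer_singleton_iff.mpr hxt
  · intro x hx
    have hcomm : x * t = t * x := Subgroup.mem_centralizer_singleton_iff.mp hx
    have hxn : ∀ n : ℤ, x * t ^ n = t ^ n * x := fun n => (Commute.zpow_right hcomm n).eq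
    rw [Subgroup.mem_normalizer_iff]
    intro h
    constructor
    · rintro ⟨n, rfl⟩
      refine ⟨n, ?_⟩
      show t ^ n = x * t ^ n * x⁻¹
      rw [hxn]
      group
    · rintro ⟨n, hn⟩
      refine ⟨n, ?_⟩
      show t ^ n = h
      have hh : h = x⁻¹ * (x * h * x⁻¹) * x := by group
      rw [← hn] at hh
      rw [hh]
      show t ^ n = x⁻¹ * t ^ n * x
      rw [mul_assoc, ← hxn]
      group
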